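/- There are constants c, C > 0 depending only on n such that the following holds. Let n ≥ 1, let q be an odd prime power, and let A, B, C ⊆ M_n(𝔽_q) with |A||B||C| ≥ C · q^{3n²−1}. Then |{a + bc : a ∈ A, b ∈ B, c ∈ C}| ≥ c · q^{n²}. -/

import Mathlib

open Finset

attribute [local instance] Classical.propDecidable
set_option linter.unusedSectionVars false
set_option maxHeartbeats 1000000

namespace ExpdAux

variable {F : Type} [Field F] [Fintype F] {n : ℕ}

noncomputable def ψ (F : Type) [Field F] [Fintype F] : AddChar F ℂ :=
  AddChar.FiniteField.primitiveChar_to_Complex F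

lemma ψ_ne_one (F : Type) [Field F] [Fintype F] : ψ F ≠ 1 := by
  have h := AddChar.FiniteField.primitiveChar_to_Complex_isPrimitive F
  intro h1
  have h2 := h (a := 1) one_ne_zero
  rw [AddChar.mulShift_one] at h2
  exact h2 h1

def trHom (M : Matrix (Fin n) (Fin n) F) : Matrix (Fin n) (Fin n) F →+ F where
  toFun b := (M * b).trace
  map_zero' := by simp
  map_add' x y := by simp [Matrix.mul_add]

noncomputable def e (M : Matrix (Fin n) (Fin n) F) : AddChar (Matrix (Fin n) (Fin n) F) ℂ :=
  (ψ F).compAddMonoidHom (trHom M)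

lemma e_apply (M b : Matrix (Fin n) (Fin n) F) : e M b = ψ F ((M * b).trace) := rfl

lemma e_comm (M b : Matrix (Fin n) (Fin n) F) : e M b = e b M := by
  rw [e_apply, e_apply, Matrix.trace_mul_comm]

lemma trace_mul_std (M : Matrix (Fin n) (Fin n) F) (i j : Fin n) (c : F) :
    (M * Matrix.single j i c).trace = M i j * c := by
  simp [Matrix.trace, Matrix.diag, Matrix.mul_apply, Matrix.single, ite_and]

lemma e_ne_one {M : Matrix (Fin n) (Fin n) F} (hM : M ≠ 0) : e M ≠ 1 := by
  obtain ⟨x₀, hx₀⟩ := AddChar.ne_one_iff.1 (ψ_ne_one F)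
  rw [AddChar.ne_one_iff]
  obtain ⟨i, j, hij⟩ : ∃ i j, M i j ≠ 0 := by
    by_contra h
    push_neg at h
    exact hM (by ext i j; simpa using h i j)
  refine ⟨Matrix.single j i ((M i j)⁻¹ * x₀), ?_⟩
  rw [e_apply, trace_mul_std]
  rw [← mul_assoc, mul_inv_cancel₀ hij, one_mul]
  exact hx₀

lemma conj_e (M b : Matrix (Fin n) (Fin n) F) :
    (starRingEnd ℂ) (e M b) = e M (-b) := by
  have hR : 0 < ringChar F := Nat.pos_of_ne_zero (CharP.ringChar_ne_zero_of_finite F)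
  rw [e_apply, AddChar.starComp_apply hR, AddChar.inv_apply, e_apply, Matrix.mul_neg,
    Matrix.trace_neg]

lemma e_mul_e (X Y b : Matrix (Fin n) (Fin n) F) :
    e X b * e Y (-b) = e (X - Y) b := by
  rw [e_apply, e_apply, e_apply, ← AddChar.map_add_eq_mul]
  congr 1
  rw [Matrix.mul_neg, Matrix.trace_neg, Matrix.sub_mul, Matrix.trace_sub]
  ring

lemma sum_e (x : Matrix (Fin n) (Fin n) F) :
    ∑ b : Matrix (Fin n) (Fin n) F, e x b =
      if x = 0 then (Fintype.card (Matrix (Fin n) (Fin n) F) : ℂ) else 0 := by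
  split_ifs with h
  · subst h
    have : ∀ b : Matrix (Fin n) (Fin n) F, e 0 b = 1 := by
      intro b; rw [e_apply]; simp
    simp [this, Finset.card_univ]
  · exact AddChar.sum_eq_zero_of_ne_one (e_ne_one h)

/-- Generic Parseval / orthogonality identity (complex version). -/
lemma parsevalC {α : Type} (T : Finset α) (φ : α → Matrix (Fin n) (Fin n) F) :
    ∑ b : Matrix (Fin n) (Fin n) F, (Complex.normSq (∑ p ∈ T, e (φ p) b) : ℂ) =
      (Fintype.card (Matrix (Fin n) (Fin n) F) : ℂ) *
        (((T ×ˢ T).filter fun pq => φ pq.1 = φ pq.2).card : ℂ) := by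
  have key : ∀ b : Matrix (Fin n) (Fin n) F,
      (Complex.normSq (∑ p ∈ T, e (φ p) b) : ℂ) =
      ∑ pq ∈ T ×ˢ T, e (φ pq.1 - φ pq.2) b := by
    intro b
    rw [← Complex.mul_conj, map_sum, Finset.sum_mul_sum, Finset.sum_product]
    refine Finset.sum_congr rfl fun p _ => Finset.sum_congr rfl fun p' _ => ?_
    rw [conj_e, e_mul_e]
  simp_rw [key]
  rw [Finset.sum_comm]
  have : ∀ pq ∈ T ×ˢ T, (∑ b : Matrix (Fin n) (Fin n) F, e (φ pq.1 - φ pq.2) b) =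
      if φ pq.1 = φ pq.2 then (Fintype.card (Matrix (Fin n) (Fin n) F) : ℂ) else 0 := by
    intro pq _
    rw [sum_e]
    simp [sub_eq_zero]
  rw [Finset.sum_congr rfl this, Finset.sum_ite, Finset.sum_const, Finset.sum_const]
  simp [mul_comm]

/-- Generic Parseval / orthogonality identity (real version). -/
lemma parseval {α : Type} (T : Finset α) (φ : α → Matrix (Fin n) (Fin n) F) :
    ∑ b : Matrix (Fin n) (Fin n) F, Complex.normSq (∑ p ∈ T, e (φ p) b) =
      (Fintype.card (Matrix (Fin n) (Fin n) F) : ℝ) *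
        (((T ×ˢ T).filter fun pq => φ pq.1 = φ pq.2).card : ℝ) := by
  have h := parsevalC T φ
  have h2 : ((∑ b : Matrix (Fin n) (Fin n) F,
      Complex.normSq (∑ p ∈ T, e (φ p) b) : ℝ) : ℂ) =
      (((Fintype.card (Matrix (Fin n) (Fin n) F) : ℝ) *
        (((T ×ˢ T).filter fun pq => φ pq.1 = φ pq.2).card : ℝ) : ℝ) : ℂ) := by
    push_cast
    exact_mod_cast h
  exact_mod_cast h2

lemma cardMat : Fintype.card (Matrix (Fin n) (Fin n) F) = Fintype.card F ^ (n * n) := by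
  rw [Module.card_eq_pow_finrank (K := F), Module.finrank_matrix]
  simp

lemma card_ker_le {M : Matrix (Fin n) (Fin n) F} (hM : M ≠ 0) :
    (univ.filter fun m : Matrix (Fin n) (Fin n) F => m * M = 0).card ≤
      Fintype.card F ^ (n * n - 1) := by
  set K := LinearMap.ker (LinearMap.mulRight F M) with hK
  have hmem : ∀ m : Matrix (Fin n) (Fin n) F, m ∈ K ↔ m * M = 0 := by
    intro m; rw [hK, LinearMap.mem_ker, LinearMap.mulRight_apply]
  have hcard : (univ.filter fun m : Matrix (Fin n) (Fin n) F => m * M = 0).card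
      = Fintype.card K := by
    rw [Fintype.card_subtype]
    congr 1
    ext m
    simp [hmem]
  have hne : K ≠ ⊤ := by
    intro h
    apply hM
    have h1 : (1 : Matrix (Fin n) (Fin n) F) ∈ K := h ▸ Submodule.mem_top
    simpa [hmem] using h1
  have hlt : Module.finrank F K < n * n := by
    have := Submodule.finrank_lt (K := F) hne
    rwa [Module.finrank_matrix, Fintype.card_fin, Module.finrank_self, mul_one] at this
  rw [hcard, Module.card_eq_pow_finrank (K := F) (V := K)]
  exact Nat.pow_le_pow_right Fintype.card_pos (by omega)

/-- Count of pairs with `s * M = s' * M` is small when `M ≠ 0`. -/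
lemma pairs_le (Sf : Finset (Matrix (Fin n) (Fin n) F)) {M : Matrix (Fin n) (Fin n) F}
    (hM : M ≠ 0) :
    (((Sf ×ˢ Sf).filter fun pq => pq.1 * M = pq.2 * M).card : ℕ) ≤
      Fintype.card F ^ (n * n - 1) * Sf.card := by
  have h1 : ((Sf ×ˢ Sf).filter fun pq => pq.1 * M = pq.2 * M).card ≤
      ((univ.filter fun m : Matrix (Fin n) (Fin n) F => m * M = 0) ×ˢ Sf).card := by
    apply Finset.card_le_card_of_injOn (fun pq => (pq.1 - pq.2, pq.2))
    · intro pq hpq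
      simp only [Finset.mem_coe, Finset.mem_filter, Finset.mem_product] at hpq ⊢
      refine ⟨⟨Finset.mem_univ _, ?_⟩, hpq.1.2⟩
      rw [Matrix.sub_mul, hpq.2, sub_self]
    · intro pq _ pq' _ h
      simp only [Prod.mk.injEq] at h
      obtain ⟨h1, h2⟩ := h
      have h3 : pq.1 = pq'.1 := by
        rw [h2] at h1
        exact sub_left_inj.mp h1
      exact Prod.ext h3 h2
  rw [Finset.card_product] at h1
  exact h1.trans (Nat.mul_le_mul_right _ (card_ker_le hM))



lemma e_mul_shift (b s M : Matrix (Fin n) (Fin n) F) : e (b * s) M = e (s * M) b := by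
  rw [e_apply, e_apply]
  congr 1
  rw [Matrix.trace_mul_comm, ← Matrix.mul_assoc, Matrix.trace_mul_comm, ← Matrix.mul_assoc]

lemma diag_card (Af : Finset (Matrix (Fin n) (Fin n) F)) :
    ((Af ×ˢ Af).filter fun pq => pq.1 = pq.2).card = Af.card := by
  have : ((Af ×ˢ Af).filter fun pq => pq.1 = pq.2) = Af.image (fun a => (a, a)) := by
    ext pq
    simp only [Finset.mem_filter, Finset.mem_product, Finset.mem_image]
    constructor
    · rintro ⟨⟨h1, h2⟩, he⟩
      exact ⟨pq.1, h1, Prod.ext rfl he⟩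
    · rintro ⟨a, ha, rfl⟩
      exact ⟨⟨ha, ha⟩, rfl⟩
  rw [this, Finset.card_image_of_injective _ (fun a b h => (Prod.ext_iff.1 h).1)]

lemma g_bound (Bf Sf : Finset (Matrix (Fin n) (Fin n) F))
    {M : Matrix (Fin n) (Fin n) F} (hM : M ≠ 0) :
    Complex.normSq (∑ bs ∈ Bf ×ˢ Sf, e (bs.1 * bs.2) M) ≤
      (Bf.card : ℝ) * ((Fintype.card (Matrix (Fin n) (Fin n) F) : ℝ) *
        ((Fintype.card F : ℝ) ^ (n * n - 1) * (Sf.card : ℝ))) := by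
  set h : Matrix (Fin n) (Fin n) F → ℂ := fun b => ∑ s ∈ Sf, e (s * M) b with hh
  have h0 : (∑ bs ∈ Bf ×ˢ Sf, e (bs.1 * bs.2) M) = ∑ b ∈ Bf, h b := by
    rw [Finset.sum_product]
    exact Finset.sum_congr rfl fun b _ => Finset.sum_congr rfl fun s _ => e_mul_shift b s M
  rw [h0]
  have c1 : Complex.normSq (∑ b ∈ Bf, h b) ≤ (∑ b ∈ Bf, ‖h b‖) ^ 2 := by
    rw [← Complex.sq_norm]
    exact pow_le_pow_left₀ (norm_nonneg _) (norm_sum_le _ _) 2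
  have c2 : (∑ b ∈ Bf, ‖h b‖) ^ 2 ≤ (Bf.card : ℝ) * ∑ b ∈ Bf, ‖h b‖ ^ 2 :=
    sq_sum_le_card_mul_sum_sq
  have c3 : (∑ b ∈ Bf, ‖h b‖ ^ 2) ≤ ∑ b : Matrix (Fin n) (Fin n) F, ‖h b‖ ^ 2 :=
    Finset.sum_le_univ_sum_of_nonneg fun b => sq_nonneg _
  have c4 : (∑ b : Matrix (Fin n) (Fin n) F, ‖h b‖ ^ 2) =
      (Fintype.card (Matrix (Fin n) (Fin n) F) : ℝ) *
        (((Sf ×ˢ Sf).filter fun pq => pq.1 * M = pq.2 * M).card : ℝ) := by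
    have := parseval Sf (fun s => s * M)
    simp only [← this, hh]
    refine Finset.sum_congr rfl fun b _ => ?_
    rw [← Complex.sq_norm]
  have c5 : (((Sf ×ˢ Sf).filter fun pq => pq.1 * M = pq.2 * M).card : ℝ) ≤
      (Fintype.card F : ℝ) ^ (n * n - 1) * (Sf.card : ℝ) := by
    exact_mod_cast pairs_le Sf hM
  calc Complex.normSq (∑ b ∈ Bf, h b) ≤ (∑ b ∈ Bf, ‖h b‖) ^ 2 := c1
    _ ≤ (Bf.card : ℝ) * ∑ b ∈ Bf, ‖h b‖ ^ 2 := c2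
    _ ≤ (Bf.card : ℝ) * ∑ b : Matrix (Fin n) (Fin n) F, ‖h b‖ ^ 2 := by
        apply mul_le_mul_of_nonneg_left c3 (Nat.cast_nonneg _)
    _ = (Bf.card : ℝ) * ((Fintype.card (Matrix (Fin n) (Fin n) F) : ℝ) *
        (((Sf ×ˢ Sf).filter fun pq => pq.1 * M = pq.2 * M).card : ℝ)) := by rw [c4]
    _ ≤ _ := by
        apply mul_le_mul_of_nonneg_left _ (Nat.cast_nonneg _)
        apply mul_le_mul_of_nonneg_left c5 (Nat.cast_nonneg _)

def vm (p : Matrix (Fin n) (Fin n) F × Matrix (Fin n) (Fin n) F × Matrix (Fin n) (Fin n) F) :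
    Matrix (Fin n) (Fin n) F := p.1 + p.2.1 * p.2.2

lemma energy_bound (Af Bf Sf : Finset (Matrix (Fin n) (Fin n) F)) :
    (Fintype.card (Matrix (Fin n) (Fin n) F) : ℝ) *
      ((((Af ×ˢ Bf ×ˢ Sf) ×ˢ (Af ×ˢ Bf ×ˢ Sf)).filter
        fun pq => vm pq.1 = vm pq.2).card : ℝ) ≤
    ((Af ×ˢ Bf ×ˢ Sf).card : ℝ) ^ 2 +
      (Fintype.card (Matrix (Fin n) (Fin n) F) : ℝ) * (Af.card : ℝ) *
        ((Bf.card : ℝ) * ((Fintype.card (Matrix (Fin n) (Fin n) F) : ℝ) *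
          ((Fintype.card F : ℝ) ^ (n * n - 1) * (Sf.card : ℝ)))) := by
  set Tf := Af ×ˢ Bf ×ˢ Sf with hTf
  set N : ℝ := (Fintype.card (Matrix (Fin n) (Fin n) F) : ℝ) with hN
  set G : ℝ := (Bf.card : ℝ) * (N * ((Fintype.card F : ℝ) ^ (n * n - 1) * (Sf.card : ℝ)))
    with hG
  have hpar := parseval Tf vm
  have hfact : ∀ M : Matrix (Fin n) (Fin n) F,
      (∑ p ∈ Tf, e (vm p) M) =
      (∑ a ∈ Af, e a M) * (∑ bs ∈ Bf ×ˢ Sf, e (bs.1 * bs.2) M) := by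
    intro M
    rw [hTf, Finset.sum_product, Finset.sum_mul_sum]
    refine Finset.sum_congr rfl fun a _ => Finset.sum_congr rfl fun bs _ => ?_
    show e (a + bs.1 * bs.2) M = _
    rw [e_comm, AddChar.map_add_eq_mul, e_comm M a, e_comm M (bs.1 * bs.2)]
  -- split off M = 0
  have hsplit : (∑ M : Matrix (Fin n) (Fin n) F, Complex.normSq (∑ p ∈ Tf, e (vm p) M)) =
      Complex.normSq (∑ p ∈ Tf, e (vm p) 0) +
      ∑ M ∈ univ.erase 0, Complex.normSq (∑ p ∈ Tf, e (vm p) M) :=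
    (Finset.add_sum_erase _ _ (Finset.mem_univ 0)).symm
  have hzero : Complex.normSq (∑ p ∈ Tf, e (vm p) 0) = ((Tf.card : ℝ)) ^ 2 := by
    have : (∑ p ∈ Tf, e (vm p) 0) = ((Tf.card : ℝ) : ℂ) := by
      rw [Finset.sum_congr rfl fun p _ => AddChar.map_zero_eq_one (e (vm p))]
      simp
    rw [this, Complex.normSq_ofReal, sq]
  have herase : (∑ M ∈ univ.erase 0, Complex.normSq (∑ p ∈ Tf, e (vm p) M)) ≤
      N * (Af.card : ℝ) * G := by
    have step1 : ∀ M ∈ univ.erase (0 : Matrix (Fin n) (Fin n) F),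
        Complex.normSq (∑ p ∈ Tf, e (vm p) M) ≤
          Complex.normSq (∑ a ∈ Af, e a M) * G := by
      intro M hMr
      have hM : M ≠ 0 := (Finset.mem_erase.1 hMr).1
      rw [hfact M, Complex.normSq_mul]
      exact mul_le_mul_of_nonneg_left (g_bound Bf Sf hM) (Complex.normSq_nonneg _)
    calc (∑ M ∈ univ.erase 0, Complex.normSq (∑ p ∈ Tf, e (vm p) M))
        ≤ ∑ M ∈ univ.erase 0, Complex.normSq (∑ a ∈ Af, e a M) * G :=
          Finset.sum_le_sum step1
      _ ≤ ∑ M : Matrix (Fin n) (Fin n) F, Complex.normSq (∑ a ∈ Af, e a M) * G := by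
          apply Finset.sum_le_univ_sum_of_nonneg
          intro b
          apply mul_nonneg (Complex.normSq_nonneg _)
          rw [hG]; positivity
      _ = (∑ M : Matrix (Fin n) (Fin n) F, Complex.normSq (∑ a ∈ Af, e a M)) * G := by
          rw [Finset.sum_mul]
      _ = N * (Af.card : ℝ) * G := by
          have hp := parseval Af (fun a => a)
          rw [hp, diag_card, mul_assoc]
  calc N * ((((Tf ×ˢ Tf).filter fun pq => vm pq.1 = vm pq.2).card : ℝ))
      = ∑ M : Matrix (Fin n) (Fin n) F, Complex.normSq (∑ p ∈ Tf, e (vm p) M) := hpar.symm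
    _ = Complex.normSq (∑ p ∈ Tf, e (vm p) 0) +
        ∑ M ∈ univ.erase 0, Complex.normSq (∑ p ∈ Tf, e (vm p) M) := hsplit
    _ ≤ ((Tf.card : ℝ)) ^ 2 + N * (Af.card : ℝ) * G := by
        rw [hzero]; exact add_le_add_right herase _

lemma cs_bound (Af Bf Sf : Finset (Matrix (Fin n) (Fin n) F)) :
    ((Af ×ˢ Bf ×ˢ Sf).card : ℝ) ^ 2 ≤
      (((Af ×ˢ Bf ×ˢ Sf).image vm).card : ℝ) *
      ((((Af ×ˢ Bf ×ˢ Sf) ×ˢ (Af ×ˢ Bf ×ˢ Sf)).filter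
        fun pq => vm pq.1 = vm pq.2).card : ℝ) := by
  set Tf := Af ×ˢ Bf ×ˢ Sf with hTf
  set I := Tf.image vm with hI
  have h1 : Tf.card = ∑ x ∈ I, (Tf.filter fun p => vm p = x).card :=
    Finset.card_eq_sum_card_fiberwise fun p hp => Finset.mem_image_of_mem _ hp
  have h2 : ((Tf ×ˢ Tf).filter fun pq => vm pq.1 = vm pq.2).card =
      ∑ x : Matrix (Fin n) (Fin n) F, ((Tf.filter fun p => vm p = x).card) ^ 2 := by
    have := Finset.card_eq_sum_card_fiberwise
      (f := fun pq : _ × _ => vm pq.1)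
      (s := (Tf ×ˢ Tf).filter fun pq => vm pq.1 = vm pq.2) (t := univ)
      (fun pq _ => Finset.mem_univ _)
    rw [this]
    refine Finset.sum_congr rfl fun x _ => ?_
    have hfib : (((Tf ×ˢ Tf).filter fun pq => vm pq.1 = vm pq.2).filter
        fun pq => vm pq.1 = x) =
        (Tf.filter fun p => vm p = x) ×ˢ (Tf.filter fun p => vm p = x) := by
      ext pq
      simp only [Finset.mem_filter, Finset.mem_product]
      constructor
      · rintro ⟨⟨⟨ht1, ht2⟩, heq⟩, hx⟩
        exact ⟨⟨ht1, hx⟩, ht2, heq ▸ hx⟩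
      · rintro ⟨⟨ht1, hx1⟩, ht2, hx2⟩
        exact ⟨⟨⟨ht1, ht2⟩, by rw [hx1, hx2]⟩, hx1⟩
    rw [hfib, Finset.card_product, sq]
  have h3 : ((Tf.card : ℝ)) ^ 2 ≤
      (I.card : ℝ) * ∑ x ∈ I, ((Tf.filter fun p => vm p = x).card : ℝ) ^ 2 := by
    have : (Tf.card : ℝ) = ∑ x ∈ I, ((Tf.filter fun p => vm p = x).card : ℝ) := by
      exact_mod_cast congrArg (Nat.cast : ℕ → ℝ) h1
    rw [this]
    exact sq_sum_le_card_mul_sum_sq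
  have h4 : (∑ x ∈ I, ((Tf.filter fun p => vm p = x).card : ℝ) ^ 2) ≤
      ∑ x : Matrix (Fin n) (Fin n) F, ((Tf.filter fun p => vm p = x).card : ℝ) ^ 2 :=
    Finset.sum_le_sum_of_subset_of_nonneg (Finset.subset_univ I)
      (fun _ _ _ => sq_nonneg _)
  have h5 : ((((Tf ×ˢ Tf).filter fun pq => vm pq.1 = vm pq.2).card : ℝ)) =
      ∑ x : Matrix (Fin n) (Fin n) F, ((Tf.filter fun p => vm p = x).card : ℝ) ^ 2 := by
    exact_mod_cast congrArg (Nat.cast : ℕ → ℝ) h2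
  rw [h5]
  calc ((Tf.card : ℝ)) ^ 2 ≤
      (I.card : ℝ) * ∑ x ∈ I, ((Tf.filter fun p => vm p = x).card : ℝ) ^ 2 := h3
    _ ≤ (I.card : ℝ) * ∑ x : Matrix (Fin n) (Fin n) F,
          ((Tf.filter fun p => vm p = x).card : ℝ) ^ 2 :=
        mul_le_mul_of_nonneg_left h4 (Nat.cast_nonneg _)



lemma main_finset (Af Bf Sf : Finset (Matrix (Fin n) (Fin n) F))
    (hP : (Fintype.card F : ℝ) ^ (3 * (n * n) - 1) ≤
      (Af.card : ℝ) * (Bf.card : ℝ) * (Sf.card : ℝ)) :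
    (Fintype.card F : ℝ) ^ (n * n) / 2 ≤
      (((Af ×ˢ Bf ×ˢ Sf).image vm).card : ℝ) := by
  set q : ℝ := (Fintype.card F : ℝ) with hq
  set N : ℝ := (Fintype.card (Matrix (Fin n) (Fin n) F) : ℝ) with hNdef
  have hNq : N = q ^ (n * n) := by rw [hNdef, hq]; exact_mod_cast cardMat
  set Tf := Af ×ˢ Bf ×ˢ Sf with hTf
  set E : ℝ := (((Tf ×ˢ Tf).filter fun pq => vm pq.1 = vm pq.2).card : ℝ) with hE
  set X : ℝ := ((Tf.image vm).card : ℝ) with hX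
  set P : ℝ := (Tf.card : ℝ) with hPdef
  have hPcard : P = (Af.card : ℝ) * (Bf.card : ℝ) * (Sf.card : ℝ) := by
    rw [hPdef, hTf, Finset.card_product, Finset.card_product]
    push_cast
    ring
  have hq0 : (0 : ℝ) < q := by rw [hq]; exact_mod_cast Fintype.card_pos
  have hP' : q ^ (3 * (n * n) - 1) ≤ P := by rw [hPcard]; exact hP
  have hP0 : (0 : ℝ) < P := lt_of_lt_of_le (pow_pos hq0 _) hP'
  have hNNq : N * (N * q ^ (n * n - 1)) = q ^ (3 * (n * n) - 1) := by
    rw [hNq, ← pow_add, ← pow_add]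
    congr 1
    omega
  have hEB := energy_bound Af Bf Sf
  have hrhs : N * (Af.card : ℝ) * ((Bf.card : ℝ) * (N * (q ^ (n * n - 1) * (Sf.card : ℝ))))
      = P * q ^ (3 * (n * n) - 1) := by
    rw [hPcard, ← hNNq]; ring
  have hNE : N * E ≤ 2 * P ^ 2 := by
    have h1 : N * E ≤ P ^ 2 + P * q ^ (3 * (n * n) - 1) := by
      rw [← hrhs]
      exact hEB
    nlinarith [mul_le_mul_of_nonneg_left hP' hP0.le]
  have hCS : P ^ 2 ≤ X * E := cs_bound Af Bf Sf
  have hN0 : (0 : ℝ) ≤ N := by rw [hNq]; positivity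
  have hX0 : (0 : ℝ) ≤ X := Nat.cast_nonneg _
  have h1 : N * P ^ 2 ≤ N * (X * E) := mul_le_mul_of_nonneg_left hCS hN0
  have h2 : X * (N * E) ≤ X * (2 * P ^ 2) := mul_le_mul_of_nonneg_left hNE hX0
  have h3 : N ≤ 2 * X := by nlinarith [mul_pos hP0 hP0]
  rw [← hNq]
  linarith

end ExpdAux

/-- Theorem: x + yz for arbitrary sets A, B, C ⊆ M_n(F_q) with |A||B||C| ≫ q^{3n²-1}. -/
theorem expander_x_add_yz_general (n : ℕ) (hn : 1 ≤ n) :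
    ∃ c C : ℝ, 0 < c ∧ 0 < C ∧
      ∀ (F : Type) [Field F] [Fintype F],
        Odd (Fintype.card F) →
        ∀ (A B S : Set (Matrix (Fin n) (Fin n) F)),
          C * (Fintype.card F : ℝ) ^ (3 * (n : ℝ) ^ 2 - 1) ≤
            (A.ncard : ℝ) * (B.ncard : ℝ) * (S.ncard : ℝ) →
          c * (Fintype.card F : ℝ) ^ ((n : ℝ) ^ 2) ≤
            ({x | ∃ a ∈ A, ∃ b ∈ B, ∃ s ∈ S, x = a + b * s}.ncard : ℝ) := by
  refine ⟨1 / 2, 1, by norm_num, by norm_num, ?_⟩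
  intro F _ _ _ A B S hyp
  classical
  have hAfin : A.Finite := Set.toFinite A
  have hBfin : B.Finite := Set.toFinite B
  have hSfin : S.Finite := Set.toFinite S
  set Af := hAfin.toFinset with hAf
  set Bf := hBfin.toFinset with hBf
  set Sf := hSfin.toFinset with hSf
  have hAn : (A.ncard : ℝ) = (Af.card : ℝ) := by
    rw [Set.ncard_eq_toFinset_card A hAfin]
  have hBn : (B.ncard : ℝ) = (Bf.card : ℝ) := by
    rw [Set.ncard_eq_toFinset_card B hBfin]
  have hSn : (S.ncard : ℝ) = (Sf.card : ℝ) := by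
    rw [Set.ncard_eq_toFinset_card S hSfin]
  -- convert exponents
  have hexp1 : (Fintype.card F : ℝ) ^ (3 * (n : ℝ) ^ 2 - 1) =
      (Fintype.card F : ℝ) ^ (3 * (n * n) - 1 : ℕ) := by
    rw [← Real.rpow_natCast (Fintype.card F : ℝ) (3 * (n * n) - 1)]
    congr 1
    have h1 : (1 : ℕ) ≤ 3 * (n * n) := by nlinarith
    rw [Nat.cast_sub h1]
    push_cast
    ring
  have hexp2 : (Fintype.card F : ℝ) ^ ((n : ℝ) ^ 2) =
      (Fintype.card F : ℝ) ^ (n * n : ℕ) := by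
    rw [← Real.rpow_natCast (Fintype.card F : ℝ) (n * n)]
    congr 1
    push_cast
    ring
  have hP : (Fintype.card F : ℝ) ^ (3 * (n * n) - 1 : ℕ) ≤
      (Af.card : ℝ) * (Bf.card : ℝ) * (Sf.card : ℝ) := by
    rw [← hAn, ← hBn, ← hSn]
    calc (Fintype.card F : ℝ) ^ (3 * (n * n) - 1 : ℕ)
        = 1 * (Fintype.card F : ℝ) ^ (3 * (n : ℝ) ^ 2 - 1) := by rw [hexp1]; ring
      _ ≤ _ := hyp
  have hmain := ExpdAux.main_finset Af Bf Sf hP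
  have hset : {x | ∃ a ∈ A, ∃ b ∈ B, ∃ s ∈ S, x = a + b * s} =
      ↑((Af ×ˢ Bf ×ˢ Sf).image ExpdAux.vm) := by
    ext x
    simp only [Set.mem_setOf_eq, Finset.coe_image, Set.mem_image, Finset.mem_coe,
      Finset.mem_product, Set.Finite.mem_toFinset, hAf, hBf, hSf, ExpdAux.vm]
    constructor
    · rintro ⟨a, ha, b, hb, s, hs, rfl⟩
      exact ⟨(a, b, s), ⟨ha, hb, hs⟩, rfl⟩
    · rintro ⟨⟨a, b, s⟩, ⟨ha, hb, hs⟩, rfl⟩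
      exact ⟨a, ha, b, hb, s, hs, rfl⟩
  rw [hset, Set.ncard_coe_finset, hexp2]
  linarith [hmain]
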